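/- If a ∪ b is an upper bound of a and b in the key poset (i.e., a ⪯ a ∪ b and b ⪯ a ∪ b), then a ∪ b is the unique least upper bound of a and b: any c with a ⪯ c and b ⪯ c satisfies a ∪ b ⪯ c. -/
import Mathlib

/-- The key poset order. -/
def KeyLE {n : ℕ} (a b : Fin n → ℕ) : Prop :=
  (∀ i, a i ≤ b i) ∧ ∀ i j : Fin n, i < j → a j < b j → a j < a i → b j < b i

/-- Strict key order. -/
def KeyLT {n : ℕ} (a b : Fin n → ℕ) : Prop := KeyLE a b ∧ a ≠ b

/-- If a ∪ b is an upper bound of a and b in the key poset, then it is the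
unique least upper bound: any common upper bound c satisfies a ∪ b ⪯ c. -/
theorem union_least_upper_bound {n : ℕ} (a b : Fin n → ℕ)
    (ha : KeyLE a (fun i => max (a i) (b i)))
    (hb : KeyLE b (fun i => max (a i) (b i))) :
    ∀ c : Fin n → ℕ, KeyLE a c → KeyLE b c →
      KeyLE (fun i => max (a i) (b i)) c := by
  intro c hac hbc
  constructor
  · intro i; exact max_le (hac.1 i) (hbc.1 i)
  · intro i j hij h1 h2
    simp only [max_lt_iff, lt_max_iff] at h1 h2 ⊢
    rcases h2 with h2 | h2
    · -- max j < a i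
      rcases le_total (a j) (b j) with hj | hj
      · -- max j = b j, b j < a i, a j ≤ b j
        have haj : a j < c j := lt_of_le_of_lt hj h1.2
        have : a j < a i := h2.1
        exact hac.2 i j hij haj this
      · exact hac.2 i j hij h1.1 h2.1
    · -- max j < b i
      rcases le_total (a j) (b j) with hj | hj
      · exact hbc.2 i j hij h1.2 h2.2
      · have hbj : b j < c j := lt_of_le_of_lt hj h1.1
        have : b j < b i := h2.2
        exact hbc.2 i j hij hbj this
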